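/- Let q be a rational prime, let K be a number field containing a primitive q-th root of unity, and let x, d, a ∈ K and a prime 𝔮_K of K satisfy the hypotheses: 𝔮_K divides q; a is not a q-th power in K and 𝔮_K has exactly one prime above it in K(∜a); ord_{𝔮_K}(x) < 0; ord_{𝔮_K}(d) is not divisible by q; ord_{𝔮_K}(d) ≤ −3·ord_{𝔮_K}(q); ord_{𝔮_K}(a) = 0; q·ord_{𝔮_K}(x) < (q−1)·ord_{𝔮_K}(d); and let F = K(α, β, γ) with α^q = 1 + d⁻¹, β^q = 1 + (dx^q + d^q)⁻¹, γ^q = 1 + (a + a⁻¹)d⁻¹. Then for every prime 𝔞_F of F with ord_{𝔞_F}(d) ≥ 0 and ord_{𝔞_F}(x) ≥ 0, all three of ord_{𝔞_F}(d), ord_{𝔞_F}(a), and ord_{𝔞_F}(dx^q + d^q) are divisible by q. -/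

import Mathlib

open IsDedekindDomain NumberField

open scoped Classical in
/-- The `v`-adic order (additive valuation) of a nonzero element `x` of a number field `K`,
with junk value `0` at `x = 0`. -/
noncomputable def ordv {K : Type*} [Field K] [NumberField K]
    (v : HeightOneSpectrum (𝓞 K)) (x : K) : ℤ :=
  if h : x = 0 then 0
  else - Multiplicative.toAdd (WithZero.unzero ((v.valuation K).ne_zero_iff.mpr h))

/-- The prime `v` of `K` has exactly one prime above it in `K(∜a)`, i.e. in any extension of
`K` generated by a root of `X^q - a`. -/
def DoesNotSplitInQthRootExt (q : ℕ) {K : Type*} [Field K] [NumberField K] (a : K)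
    (v : HeightOneSpectrum (𝓞 K)) : Prop :=
  ∀ (Ka : Type*) [Field Ka] [NumberField Ka] [Algebra K Ka] (δ : Ka),
    δ ^ q = algebraMap K Ka a → IntermediateField.adjoin K ({δ} : Set Ka) = ⊤ →
      ∃! w : HeightOneSpectrum (𝓞 Ka),
        w.asIdeal.comap (algebraMap (𝓞 K) (𝓞 Ka)) = v.asIdeal

section OrdvHelpers

variable {K : Type*} [Field K] [NumberField K] (v : HeightOneSpectrum (𝓞 K))

lemma ordv_spec {x : K} (hx : x ≠ 0) :
    v.valuation K x = ((Multiplicative.ofAdd (-ordv v x) : Multiplicative ℤ) :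
      WithZero (Multiplicative ℤ)) := by
  rw [ordv, dif_neg hx, neg_neg, ofAdd_toAdd, WithZero.coe_unzero]

lemma ordv_mul {x y : K} (hx : x ≠ 0) (hy : y ≠ 0) :
    ordv v (x * y) = ordv v x + ordv v y := by
  have h := (v.valuation K).map_mul x y
  rw [ordv_spec v hx, ordv_spec v hy, ordv_spec v (mul_ne_zero hx hy),
    ← WithZero.coe_mul, WithZero.coe_inj, ← ofAdd_add] at h
  have := Multiplicative.ofAdd.injective h
  omega

lemma ordv_one : ordv v (1 : K) = 0 := by
  have := ordv_mul v (one_ne_zero (α := K)) (one_ne_zero (α := K))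
  rw [mul_one] at this; omega

lemma ordv_inv {x : K} (hx : x ≠ 0) : ordv v x⁻¹ = - ordv v x := by
  have := ordv_mul v hx (inv_ne_zero hx)
  rw [mul_inv_cancel₀ hx, ordv_one] at this; omega

lemma ordv_pow {x : K} (hx : x ≠ 0) (n : ℕ) : ordv v (x ^ n) = n * ordv v x := by
  induction n with
  | zero => simpa using ordv_one v
  | succ n ih =>
      rw [pow_succ, ordv_mul v (pow_ne_zero n hx) hx, ih]
      push_cast; ring

lemma ordv_lt_iff {x y : K} (hx : x ≠ 0) (hy : y ≠ 0) :
    v.valuation K x < v.valuation K y ↔ ordv v y < ordv v x := by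
  rw [ordv_spec v hx, ordv_spec v hy, WithZero.coe_lt_coe, Multiplicative.ofAdd_lt]
  omega

lemma ordv_add_of_lt {x y : K} (hx : x ≠ 0) (hy : y ≠ 0)
    (h : ordv v x < ordv v y) : ordv v (x + y) = ordv v x := by
  have hv : v.valuation K y < v.valuation K x := (ordv_lt_iff v hy hx).mpr h
  have heq := Valuation.map_add_eq_of_lt_left (v.valuation K) hv
  have hxy : x + y ≠ 0 := by
    intro h0
    rw [h0, Valuation.map_zero] at heq
    exact hx (((v.valuation K).zero_iff).mp heq.symm)
  rw [ordv_spec v hx, ordv_spec v hxy, WithZero.coe_inj] at heq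
  have := Multiplicative.ofAdd.injective heq
  omega

lemma ordv_add_ge {x y : K} (hx : x ≠ 0) (hy : y ≠ 0) (hxy : x + y ≠ 0) :
    min (ordv v x) (ordv v y) ≤ ordv v (x + y) := by
  have h := (v.valuation K).map_add x y
  rw [ordv_spec v hx, ordv_spec v hy, ordv_spec v hxy, le_max_iff,
    WithZero.coe_le_coe, WithZero.coe_le_coe, Multiplicative.ofAdd_le, Multiplicative.ofAdd_le] at h
  omega

lemma ordv_neg {x : K} (hx : x ≠ 0) : ordv v (-x) = ordv v x := by
  have hm1 : ordv v (-1 : K) = 0 := by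
    have h := ordv_mul v (neg_ne_zero.mpr (one_ne_zero (α := K)))
      (neg_ne_zero.mpr (one_ne_zero (α := K)))
    rw [neg_mul_neg, one_mul, ordv_one] at h; omega
  have := ordv_mul v (neg_ne_zero.mpr (one_ne_zero (α := K))) hx
  rw [neg_one_mul, hm1] at this; omega

lemma ordv_key {q : ℕ} (hq : q ≠ 0) {t γ : K} (ht : t ≠ 0)
    (hγ : γ ^ q = 1 + t) (htneg : ordv v t < 0) : (q : ℤ) ∣ ordv v t := by
  have h1t : (1 : K) + t ≠ 0 := by
    intro h0
    have ht1 : t = -1 := eq_neg_of_add_eq_zero_right h0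
    rw [ht1, ordv_neg v (one_ne_zero (α := K)), ordv_one] at htneg
    omega
  have hγ0 : γ ≠ 0 := by
    intro h
    rw [h, zero_pow hq] at hγ
    exact h1t hγ.symm
  have hpow := ordv_pow v hγ0 q
  have hsum : ordv v (t + 1) = ordv v t := by
    refine ordv_add_of_lt v ht (one_ne_zero (α := K)) ?_
    rw [ordv_one]; exact htneg
  rw [hγ, add_comm, hsum] at hpow
  exact ⟨ordv v γ, hpow⟩

end OrdvHelpers

/-- Proposition: with `F = K(α, β, γ)` where `α^q = 1 + d⁻¹`,
`β^q = 1 + (dx^q + d^q)⁻¹`, `γ^q = 1 + (a + a⁻¹)d⁻¹`, and with `x, d, a` and the prime `𝔮`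
of `K` (dividing `q`) as in the previous proposition, every prime `𝔞` of `F` at which both
`d` and `x` are integral satisfies: `ord_𝔞 d`, `ord_𝔞 a` and `ord_𝔞 (dx^q + d^q)` are all
divisible by `q`. -/
theorem orders_divisible_by_q_away_from_poles_of_d_and_x
    (q : ℕ) (hq : q.Prime)
    (K : Type*) [Field K] [NumberField K] (hzeta : ∃ ζ : K, IsPrimitiveRoot ζ q)
    (x d a : K) (hx : x ≠ 0) (hd : d ≠ 0) (ha : a ≠ 0) (hdx : d * x ^ q + d ^ q ≠ 0)
    (F : Type*) [Field F] [NumberField F] [Algebra K F] (α β γ : F)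
    (hα : α ^ q = algebraMap K F (1 + d⁻¹))
    (hβ : β ^ q = algebraMap K F (1 + (d * x ^ q + d ^ q)⁻¹))
    (hγ : γ ^ q = algebraMap K F (1 + (a + a⁻¹) * d⁻¹))
    (hgen : IntermediateField.adjoin K ({α, β, γ} : Set F) = ⊤)
    (𝔮 : HeightOneSpectrum (𝓞 K))
    (h1 : (q : 𝓞 K) ∈ 𝔮.asIdeal)
    (h2 : (¬ ∃ y : K, y ^ q = a) ∧ DoesNotSplitInQthRootExt q a 𝔮)
    (h3 : ordv 𝔮 x < 0)
    (h4 : ¬ (q : ℤ) ∣ ordv 𝔮 d)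
    (h5 : ordv 𝔮 d ≤ -3 * ordv 𝔮 (q : K))
    (h6 : ordv 𝔮 a = 0)
    (h7 : (q : ℤ) * ordv 𝔮 x < (q - 1 : ℤ) * ordv 𝔮 d) :
    ∀ 𝔞 : HeightOneSpectrum (𝓞 F),
      0 ≤ ordv 𝔞 (algebraMap K F d) → 0 ≤ ordv 𝔞 (algebraMap K F x) →
        (q : ℤ) ∣ ordv 𝔞 (algebraMap K F d) ∧
        (q : ℤ) ∣ ordv 𝔞 (algebraMap K F a) ∧
        (q : ℤ) ∣ ordv 𝔞 (algebraMap K F (d * x ^ q + d ^ q)) := by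
  intro 𝔞 hD hX
  have hq0 : q ≠ 0 := hq.ne_zero
  set φ := algebraMap K F with hφ
  have hDF : φ d ≠ 0 := by simp [hd]
  have hXF : φ x ≠ 0 := by simp [hx]
  have hAF : φ a ≠ 0 := by simp [ha]
  have hSF : φ (d * x ^ q + d ^ q) ≠ 0 := by simp only [ne_eq, map_eq_zero]; exact hdx
  -- Part 1: divisibility for d
  have part1 : (q : ℤ) ∣ ordv 𝔞 (φ d) := by
    rcases eq_or_lt_of_le hD with h0 | hpos
    · rw [← h0]; exact dvd_zero _
    · have htneg : ordv 𝔞 (φ d)⁻¹ < 0 := by rw [ordv_inv 𝔞 hDF]; omega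
      have hα' : α ^ q = 1 + (φ d)⁻¹ := by rw [hα, map_add, map_one, map_inv₀]
      have := ordv_key 𝔞 hq0 (inv_ne_zero hDF) hα' htneg
      rw [ordv_inv 𝔞 hDF] at this
      exact (Int.dvd_neg).mp this
  refine ⟨part1, ?_, ?_⟩
  -- Part 2: divisibility for a
  · by_cases hA0 : ordv 𝔞 (φ a) = 0
    · rw [hA0]; exact dvd_zero _
    · have hAA : φ a + (φ a)⁻¹ ≠ 0 := by
        intro h0
        have h1 : (φ a)⁻¹ = -(φ a) := eq_neg_of_add_eq_zero_right h0
        have := ordv_inv 𝔞 hAF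
        rw [h1, ordv_neg 𝔞 hAF] at this
        omega
      have hmin : ordv 𝔞 (φ a + (φ a)⁻¹) = min (ordv 𝔞 (φ a)) (-(ordv 𝔞 (φ a))) := by
        rcases lt_or_gt_of_ne hA0 with hneg | hpos
        · rw [ordv_add_of_lt 𝔞 hAF (inv_ne_zero hAF)
            (by rw [ordv_inv 𝔞 hAF]; omega)]
          omega
        · rw [add_comm, ordv_add_of_lt 𝔞 (inv_ne_zero hAF) hAF
            (by rw [ordv_inv 𝔞 hAF]; omega), ordv_inv 𝔞 hAF]
          omega
      have hγ' : γ ^ q = 1 + (φ a + (φ a)⁻¹) * (φ d)⁻¹ := by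
        rw [hγ, map_add, map_one, map_mul, map_add, map_inv₀, map_inv₀]
      have htne : (φ a + (φ a)⁻¹) * (φ d)⁻¹ ≠ 0 := mul_ne_zero hAA (inv_ne_zero hDF)
      have htval : ordv 𝔞 ((φ a + (φ a)⁻¹) * (φ d)⁻¹)
          = min (ordv 𝔞 (φ a)) (-(ordv 𝔞 (φ a))) - ordv 𝔞 (φ d) := by
        rw [ordv_mul 𝔞 hAA (inv_ne_zero hDF), hmin, ordv_inv 𝔞 hDF]; ring
      have htneg : ordv 𝔞 ((φ a + (φ a)⁻¹) * (φ d)⁻¹) < 0 := by rw [htval]; omega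
      have hdvd := ordv_key 𝔞 hq0 htne hγ' htneg
      rw [htval] at hdvd
      have hm : (q : ℤ) ∣ min (ordv 𝔞 (φ a)) (-(ordv 𝔞 (φ a))) := by
        have := dvd_add hdvd part1
        simpa using this
      rcases le_or_gt (ordv 𝔞 (φ a)) (-(ordv 𝔞 (φ a))) with h | h
      · rwa [min_eq_left h] at hm
      · rw [min_eq_right h.le] at hm; exact (Int.dvd_neg).mp hm
  -- Part 3: divisibility for s = d x^q + d^q
  · have hsum : φ (d * x ^ q + d ^ q) = φ d * (φ x) ^ q + (φ d) ^ q := by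
      rw [map_add, map_mul, map_pow, map_pow]
    have hS0 : 0 ≤ ordv 𝔞 (φ (d * x ^ q + d ^ q)) := by
      rw [hsum]
      have h1 : 0 ≤ ordv 𝔞 (φ d * (φ x) ^ q) := by
        rw [ordv_mul 𝔞 hDF (pow_ne_zero q hXF), ordv_pow 𝔞 hXF q]
        positivity
      have h2 : 0 ≤ ordv 𝔞 ((φ d) ^ q) := by
        rw [ordv_pow 𝔞 hDF q]; positivity
      have := ordv_add_ge 𝔞 (mul_ne_zero hDF (pow_ne_zero q hXF)) (pow_ne_zero q hDF)
        (by rw [← hsum]; exact hSF)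
      omega
    rcases eq_or_lt_of_le hS0 with h0 | hpos
    · rw [← h0]; exact dvd_zero _
    · have htneg : ordv 𝔞 (φ (d * x ^ q + d ^ q))⁻¹ < 0 := by
        rw [ordv_inv 𝔞 hSF]; omega
      have hβ' : β ^ q = 1 + (φ (d * x ^ q + d ^ q))⁻¹ := by
        rw [hβ, map_add, map_one, map_inv₀]
      have := ordv_key 𝔞 hq0 (inv_ne_zero hSF) hβ' htneg
      rw [ordv_inv 𝔞 hSF] at this
      exact (Int.dvd_neg).mp this
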